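/- Let G be a persistent graph on {1,...,n} and let Ĝ be its extension by vertices 0 and n+1 adjacent to everything. For an edge e = {v,w} of G with v < w, define ℓ(e) = max{ i < v : {i,w} is an edge of Ĝ } and r(e) = min{ i > w : {v,i} is an edge of Ĝ }. Then the four vertices ℓ(e), v, w, r(e) form a clique in Ĝ. -/

import Mathlib

/-- A graph on the ordered vertex set `Fin n` (representing `{1,…,n}`) is *persistent* if it
contains the Hamilton path `1,…,n`, satisfies the X-property and the bar-property. -/
def IsPersistent {n : ℕ} (G : SimpleGraph (Fin n)) : Prop :=
  (∀ i j : Fin n, (i : ℕ) + 1 = (j : ℕ) → G.Adj i j) ∧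
  (∀ a b c d : Fin n, a < b → b < c → c < d → G.Adj a c → G.Adj b d → G.Adj a d) ∧
  (∀ a b : Fin n, (a : ℕ) + 1 < (b : ℕ) → G.Adj a b →
    ∃ x : Fin n, a < x ∧ x < b ∧ G.Adj a x ∧ G.Adj x b)

/-- The extension `Ĝ` of `G` by two universal vertices `0` and `n+1`.  Vertices of `G`
(elements of `Fin n`, representing `1,…,n`) are embedded into `Fin (n+2)` via `v ↦ v+1`. -/
def extendGraph (n : ℕ) (G : SimpleGraph (Fin n)) : SimpleGraph (Fin (n + 2)) where
  Adj u v := u ≠ v ∧ ((u : ℕ) = 0 ∨ (u : ℕ) = n + 1 ∨ (v : ℕ) = 0 ∨ (v : ℕ) = n + 1 ∨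
    ∃ a b : Fin n, G.Adj a b ∧
      (((a : ℕ) + 1 = (u : ℕ) ∧ (b : ℕ) + 1 = (v : ℕ)) ∨
       ((a : ℕ) + 1 = (v : ℕ) ∧ (b : ℕ) + 1 = (u : ℕ))))
  symm := by
    constructor
    rintro u v ⟨h1, h2⟩
    refine ⟨h1.symm, ?_⟩
    rcases h2 with h | h | h | h | ⟨a, b, hab, hc⟩
    · tauto
    · tauto
    · tauto
    · tauto
    · exact Or.inr (Or.inr (Or.inr (Or.inr ⟨b, a, hab.symm, by tauto⟩)))
  loopless := by constructor; rintro u ⟨h, _⟩; exact h rfl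

/-- for an edge `e = {v,w}` of a persistent graph `G`, the vertices
`ℓ(e), v, w, r(e)` form a clique in the extension `Ĝ`.  Here `V = v+1` and `W = w+1` are
the images of `v` and `w` in `Ĝ`, `L = ℓ(e)` is the largest vertex below `V` adjacent to
`W` in `Ĝ`, and `R = r(e)` is the smallest vertex above `W` adjacent to `V` in `Ĝ`. -/

lemma claim1 {n : ℕ} {G : SimpleGraph (Fin n)} (hG : IsPersistent G)
    (v w ℓ : Fin n) (hlv : ℓ < v) (hvw : v < w) (he : G.Adj v w)
    (hmax : ∀ y : Fin n, y < v → G.Adj y w → y ≤ ℓ) :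
    ∀ k (x : Fin n), (x : ℕ) ≤ k → v ≤ x → x ≤ w → G.Adj ℓ x → G.Adj ℓ v := by
  intro k
  induction k with
  | zero =>
    intro x hx hvx hxw hadj
    rcases eq_or_lt_of_le hvx with h | h
    · rwa [h]
    · exact absurd (Fin.lt_def.mp h) (by omega)
  | succ k ih =>
    intro x hx hvx hxw hadj
    rcases eq_or_lt_of_le hvx with h | h
    · rwa [h]
    · have hℓx : (ℓ : ℕ) + 1 < (x : ℕ) := by
        have := Fin.lt_def.mp hlv; have := Fin.lt_def.mp h; omega
      obtain ⟨y, h1, h2, h3, h4⟩ := hG.2.2 ℓ x hℓx hadj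
      by_cases hyv : y < v
      · have hyw : G.Adj y w := by
          rcases lt_or_eq_of_le hxw with hxw' | hxw'
          · exact hG.2.1 y v x w hyv h hxw' h4 he
          · rwa [hxw'] at h4
        exact absurd (hmax y hyv hyw) (not_le.mpr h1)
      · exact ih y (by have := Fin.lt_def.mp h2; omega) (not_lt.mp hyv)
          (le_of_lt (lt_of_lt_of_le h2 hxw)) h3

lemma claim2 {n : ℕ} {G : SimpleGraph (Fin n)} (hG : IsPersistent G)
    (v w r : Fin n) (hvw : v < w) (hwr : w < r) (he : G.Adj v w)
    (hmin : ∀ y : Fin n, w < y → G.Adj v y → r ≤ y) :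
    ∀ k (x : Fin n), (w : ℕ) - (x : ℕ) ≤ k → v ≤ x → x ≤ w → G.Adj x r → G.Adj w r := by
  intro k
  induction k with
  | zero =>
    intro x hx hvx hxw hadj
    have : x = w := le_antisymm hxw (by rw [Fin.le_def]; omega)
    rwa [← this]
  | succ k ih =>
    intro x hx hvx hxw hadj
    rcases eq_or_lt_of_le hxw with h | h
    · rwa [h] at hadj
    · have hxr : (x : ℕ) + 1 < (r : ℕ) := by
        have := Fin.lt_def.mp h; have := Fin.lt_def.mp hwr; omega
      obtain ⟨y, h1, h2, h3, h4⟩ := hG.2.2 x r hxr hadj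
      by_cases hwy : w < y
      · have hvy : G.Adj v y := by
          rcases eq_or_lt_of_le hvx with hvx' | hvx'
          · rwa [← hvx'] at h3
          · exact hG.2.1 v x w y hvx' h hwy he h3
        exact absurd (hmin y hwy hvy) (not_le.mpr h2)
      · exact ih y (by have := Fin.lt_def.mp h1; omega)
          (le_of_lt (lt_of_le_of_lt hvx h1)) (not_lt.mp hwy) h4

lemma ext_adj_of_adj {n : ℕ} {G : SimpleGraph (Fin n)} (a b : Fin n) (A B : Fin (n + 2))
    (hA : (A : ℕ) = (a : ℕ) + 1) (hB : (B : ℕ) = (b : ℕ) + 1) (h : G.Adj a b) :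
    (extendGraph n G).Adj A B := by
  refine ⟨fun e => h.ne (Fin.ext ?_), Or.inr (Or.inr (Or.inr (Or.inr
    ⟨a, b, h, Or.inl ⟨hA.symm, hB.symm⟩⟩)))⟩
  have := congrArg Fin.val e; omega

lemma adj_of_ext_adj {n : ℕ} {G : SimpleGraph (Fin n)} (a b : Fin n) (A B : Fin (n + 2))
    (hA : (A : ℕ) = (a : ℕ) + 1) (hB : (B : ℕ) = (b : ℕ) + 1)
    (h : (extendGraph n G).Adj A B) : G.Adj a b := by
  obtain ⟨hne, h⟩ := h
  have ha := a.isLt; have hb := b.isLt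
  rcases h with h | h | h | h | ⟨x, y, hxy, ⟨h1, h2⟩ | ⟨h1, h2⟩⟩
  · omega
  · omega
  · omega
  · omega
  · have hx : x = a := Fin.ext (by omega)
    have hy : y = b := Fin.ext (by omega)
    rwa [hx, hy] at hxy
  · have hx : x = b := Fin.ext (by omega)
    have hy : y = a := Fin.ext (by omega)
    rw [hx, hy] at hxy; exact hxy.symm

theorem xi_clique {n : ℕ} (G : SimpleGraph (Fin n)) (hG : IsPersistent G)
    (v w : Fin n) (hvw : v < w) (he : G.Adj v w)
    (V W L R : Fin (n + 2)) (hV : (V : ℕ) = (v : ℕ) + 1) (hW : (W : ℕ) = (w : ℕ) + 1)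
    (hLV : L < V) (hLW : (extendGraph n G).Adj L W)
    (hLmax : ∀ i : Fin (n + 2), i < V → (extendGraph n G).Adj i W → i ≤ L)
    (hWR : W < R) (hVR : (extendGraph n G).Adj V R)
    (hRmin : ∀ i : Fin (n + 2), W < i → (extendGraph n G).Adj V i → R ≤ i) :
    (extendGraph n G).Adj L V ∧ (extendGraph n G).Adj L W ∧ (extendGraph n G).Adj L R ∧
    (extendGraph n G).Adj V W ∧ (extendGraph n G).Adj V R ∧ (extendGraph n G).Adj W R := by
  have hv := v.isLt; have hw := w.isLt
  have hvwN := Fin.lt_def.mp hvw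
  have hLVN := Fin.lt_def.mp hLV
  have hWRN := Fin.lt_def.mp hWR
  have hRle := R.isLt
  have hVWfin : V < W := Fin.lt_def.mpr (by omega)
  have hLRfin : L < R := Fin.lt_def.mpr (by omega)
  have hVW : (extendGraph n G).Adj V W := ext_adj_of_adj v w V W hV hW he
  -- interior description of L
  have hLcase : (L : ℕ) = 0 ∨ ∃ ℓ : Fin n, (ℓ : ℕ) + 1 = (L : ℕ) ∧ ℓ < v ∧ G.Adj ℓ w := by
    by_cases hL0 : (L : ℕ) = 0
    · exact Or.inl hL0
    · refine Or.inr ⟨⟨(L : ℕ) - 1, by omega⟩, by simp; omega, Fin.lt_def.mpr (by simp; omega), ?_⟩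
      exact adj_of_ext_adj _ w L W (by simp; omega) hW hLW
  have hRcase : (R : ℕ) = n + 1 ∨ ∃ r : Fin n, (r : ℕ) + 1 = (R : ℕ) ∧ w < r ∧ G.Adj v r := by
    by_cases hRn : (R : ℕ) = n + 1
    · exact Or.inl hRn
    · refine Or.inr ⟨⟨(R : ℕ) - 1, by omega⟩, by simp; omega, Fin.lt_def.mpr (by simp; omega), ?_⟩
      exact adj_of_ext_adj v _ V R hV (by simp; omega) hVR
  -- L adjacent to V
  have hLVadj : (extendGraph n G).Adj L V := by
    rcases hLcase with h0 | ⟨ℓ, hℓL, hℓv, hℓw⟩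
    · exact ⟨Fin.ne_of_lt hLV, Or.inl h0⟩
    · have hmax : ∀ y : Fin n, y < v → G.Adj y w → y ≤ ℓ := by
        intro y hy hadj
        have hle := hLmax ⟨(y : ℕ) + 1, by omega⟩ (Fin.lt_def.mpr (by simp; omega))
          (ext_adj_of_adj y w _ W rfl hW hadj)
        have := Fin.le_def.mp hle
        exact Fin.le_def.mpr (by simp at this; omega)
      have : G.Adj ℓ v := claim1 hG v w ℓ hℓv hvw he hmax (w : ℕ) w le_rfl hvw.le le_rfl hℓw
      exact ext_adj_of_adj ℓ v L V (by omega) hV this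
  -- W adjacent to R
  have hWRadj : (extendGraph n G).Adj W R := by
    rcases hRcase with h0 | ⟨r, hrR, hwr, hvr⟩
    · exact ⟨Fin.ne_of_lt hWR, Or.inr (Or.inr (Or.inr (Or.inl h0)))⟩
    · have hmin : ∀ y : Fin n, w < y → G.Adj v y → r ≤ y := by
        intro y hy hadj
        have hle := hRmin ⟨(y : ℕ) + 1, by omega⟩ (Fin.lt_def.mpr (by simp; omega))
          (ext_adj_of_adj v y V _ hV rfl hadj)
        have := Fin.le_def.mp hle
        exact Fin.le_def.mpr (by simp at this; omega)
      have : G.Adj w r := claim2 hG v w r hvw hwr he hmin (w : ℕ) v (by omega) le_rfl hvw.le hvr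
      exact ext_adj_of_adj w r W R hW (by omega) this
  -- L adjacent to R
  have hLRadj : (extendGraph n G).Adj L R := by
    rcases hLcase with h0 | ⟨ℓ, hℓL, hℓv, hℓw⟩
    · exact ⟨Fin.ne_of_lt hLRfin, Or.inl h0⟩
    rcases hRcase with h0 | ⟨r, hrR, hwr, hvr⟩
    · exact ⟨Fin.ne_of_lt hLRfin, Or.inr (Or.inr (Or.inr (Or.inl h0)))⟩
    · have : G.Adj ℓ r := hG.2.1 ℓ v w r hℓv hvw hwr hℓw hvr
      exact ext_adj_of_adj ℓ r L R (by omega) (by omega) this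
  exact ⟨hLVadj, hLW, hLRadj, hVW, hVR, hWRadj⟩
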